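/- For every integer c ≥ 3, there exists a group G which is not finitely generated and is metabelian, such that: (i) for every prime p, G is a residually finite p-group, i.e. for every nontrivial g ∈ G there is a homomorphism from G onto a finite p-group whose kernel does not contain g; (ii) G is generated by a subset T which is normal (closed under conjugation by elements of G), commutator-closed (closed under taking commutators of its elements), and satisfies the Malcev law M_c(x,y); and (iii) G satisfies no positive law, i.e. for every pair of distinct elements α ≠ β of the free monoid on a countable set of variables, there exists a substitution of elements of G for the variables under which α and β take different values. -/

import Mathlib

/-- Malcev word pair `(α_c, β_c)`. -/
def malcevPair {G : Type*} [Monoid G] (c : ℕ) (x y : G) : G × G :=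
  Nat.rec (x, y) (fun _ p => (p.1 * p.2, p.2 * p.1)) c

/-- The Malcev word `α_c(x,y)`. -/
def malcevAlpha {G : Type*} [Monoid G] (c : ℕ) (x y : G) : G := (malcevPair c x y).1

/-- The Malcev word `β_c(x,y)`. -/
def malcevBeta {G : Type*} [Monoid G] (c : ℕ) (x y : G) : G := (malcevPair c x y).2

/-- The evaluation of `f_c(X,Y) = (X-1)·∏_{i=0}^{c-2}(X^{2^i}Y^{2^i}-1)` at two
elements of a (possibly noncommutative) ring. -/
def fEval {R : Type*} [Ring R] (c : ℕ) (t u : R) : R :=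
  (t - 1) * ((List.range (c - 1)).map fun i => t ^ 2 ^ i * u ^ 2 ^ i - 1).prod

/-- The endomorphism of the abelian normal subgroup `A` (written additively)
induced by conjugation by `t`, i.e. `a ↦ a^t = t⁻¹ * a * t`. -/
def conjEnd {G : Type*} [Group G] (A : Subgroup G) [hN : A.Normal] [IsMulCommutative A]
    (t : G) : AddMonoid.End (Additive A) :=
  AddMonoidHom.mk'
    (fun a => Additive.ofMul (⟨t⁻¹ * ((Additive.toMul a : A) : G) * t, by
      simpa using hN.conj_mem _ (Additive.toMul a).2 t⁻¹⟩ : A))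
    (fun a b => congrArg Additive.ofMul (Subtype.ext (by
      show t⁻¹ * ((Additive.toMul a * Additive.toMul b : A) : G) * t = _
      simp only [toMul_ofMul, Subgroup.coe_mul]
      group)))

open scoped commutatorElement

/-- A witness for the Main Theorem: a non-finitely-generated metabelian group `G`
(with an abelian normal subgroup containing all commutators) which is a residually
finite `p`-group for all primes `p`, is generated by a normal commutator-closed
subset `T` satisfying the Malcev law `M_c`, and satisfies no positive law. -/
structure MainCounterexample (c : ℕ) : Type 1 where
  G : Type
  [grp : Group G]
  /-- `G` is not finitely generated. -/
  not_fg : ¬ Group.FG G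
  /-- `G` is metabelian: it has an abelian normal subgroup with abelian quotient
  (the quotient `G/A` is abelian iff every commutator lies in `A`). -/
  metabelian : ∃ A : Subgroup G, A.Normal ∧ (∀ x y : A, x * y = y * x) ∧
    ∀ x y : G, ⁅x, y⁆ ∈ A
  /-- For every prime `p`, `G` is a residually finite `p`-group: every nontrivial
  `g` survives in a quotient by a normal subgroup which is a finite group of
  `p`-power order (equivalently, there is a homomorphism from `G` onto a finite
  `p`-group whose kernel does not contain `g`). -/
  residually_finite_p : ∀ p : ℕ, p.Prime → ∀ g : G, g ≠ 1 →
    ∃ N : Subgroup G, N.Normal ∧ g ∉ N ∧ ∃ k : ℕ, Nat.card (G ⧸ N) = p ^ k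
  T : Set G
  /-- `T` generates `G`. -/
  T_gen : Subgroup.closure T = ⊤
  /-- `T` is a normal subset of `G`. -/
  T_normal : ∀ x ∈ T, ∀ g : G, g * x * g⁻¹ ∈ T
  /-- `T` is commutator-closed. -/
  T_commutator_closed : ∀ x ∈ T, ∀ y ∈ T, ⁅x, y⁆ ∈ T
  /-- `T` satisfies the Malcev law `M_c(x,y)`. -/
  T_satisfies_Mc : ∀ x ∈ T, ∀ y ∈ T, malcevAlpha c x y = malcevBeta c x y
  /-- `G` satisfies no positive law: any two distinct positive words (elements of
  the free monoid on countably many variables) can be separated by a substitution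
  of elements of `G`. -/
  no_positive_law : ∀ α β : FreeMonoid ℕ, α ≠ β →
    ∃ σ : ℕ → G, FreeMonoid.lift σ α ≠ FreeMonoid.lift σ β

namespace MCX

variable {ι : Type*} [DecidableEq ι] {R : Type*} [CommRing R]

/-- multiplication by `∏ j (1 + v j · x_j)` in the "squarefree" ring of functions
`Finset ι → R`. -/
def rho (v : ι →₀ R) (b : Finset ι → R) : Finset ι → R :=
  fun S => ∑ T ∈ S.powerset, (∏ j ∈ S \ T, v j) * b T

theorem rho_add_right (v : ι →₀ R) (b c : Finset ι → R) :
    rho v (b + c) = rho v b + rho v c := by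
  funext S
  simp [rho, mul_add, Finset.sum_add_distrib]

theorem rho_zero_right (v : ι →₀ R) : rho v (0 : Finset ι → R) = 0 := by
  funext S; simp [rho]

theorem rho_neg_right (v : ι →₀ R) (b : Finset ι → R) : rho v (-b) = -(rho v b) := by
  funext S; simp [rho, Finset.sum_neg_distrib]

theorem rho_zero (b : Finset ι → R) : rho (0 : ι →₀ R) b = b := by
  funext S
  rw [rho, Finset.sum_eq_single S]
  · simp
  · intro T hT hTS
    have h1 : T ⊆ S := Finset.mem_powerset.1 hT
    have : (S \ T).Nonempty := by
      rw [Finset.sdiff_nonempty]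
      intro h2
      exact hTS (Finset.Subset.antisymm h1 h2)
    obtain ⟨j, hj⟩ := this
    rw [Finset.prod_eq_zero hj (by simp), zero_mul]
  · intro h; exact absurd (Finset.mem_powerset.2 (Finset.Subset.refl S)) h

theorem rho_rho (v w : ι →₀ R) (b : Finset ι → R) :
    rho v (rho w b) = rho (v + w) b := by
  funext S
  show ∑ U ∈ S.powerset, (∏ j ∈ S \ U, v j) * (∑ T ∈ U.powerset, (∏ j ∈ U \ T, w j) * b T)
      = ∑ T ∈ S.powerset, (∏ j ∈ S \ T, (v j + w j)) * b T
  simp only [Finset.mul_sum]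
  rw [Finset.sum_sigma']
  conv_rhs =>
    enter [2, T]
    rw [Finset.prod_add, Finset.sum_mul]
  rw [Finset.sum_sigma']
  refine Finset.sum_nbij' (fun p => ⟨p.2, S \ p.1⟩) (fun q => ⟨S \ q.2, q.1⟩) ?_ ?_ ?_ ?_ ?_
  · rintro ⟨U, T⟩ hp
    simp only [Finset.mem_sigma, Finset.mem_powerset] at hp ⊢
    obtain ⟨hU, hT⟩ := hp
    exact ⟨hT.trans hU, Finset.sdiff_subset_sdiff (Finset.Subset.refl S) hT⟩
  · rintro ⟨T, t⟩ hq
    simp only [Finset.mem_sigma, Finset.mem_powerset] at hq ⊢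
    obtain ⟨hT, ht⟩ := hq
    refine ⟨Finset.sdiff_subset, ?_⟩
    intro x hx
    simp only [Finset.mem_sdiff]
    have h1 := hT hx
    refine ⟨h1, fun hxt => ?_⟩
    have := ht hxt
    simp only [Finset.mem_sdiff, h1] at this
    exact this.2 hx
  · rintro ⟨U, T⟩ hp
    simp only [Finset.mem_sigma, Finset.mem_powerset] at hp
    have : S \ (S \ U) = U := Finset.sdiff_sdiff_eq_self hp.1
    simp [this]
  · rintro ⟨T, t⟩ hq
    simp only [Finset.mem_sigma, Finset.mem_powerset] at hq
    have ht : t ⊆ S := hq.2.trans Finset.sdiff_subset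
    have : S \ (S \ t) = t := Finset.sdiff_sdiff_eq_self ht
    simp [this]
  · rintro ⟨U, T⟩ hp
    simp only [Finset.mem_sigma, Finset.mem_powerset] at hp
    obtain ⟨hU, hT⟩ := hp
    have h2 : (S \ T) \ (S \ U) = U \ T := by
      ext x
      simp only [Finset.mem_sdiff, not_and, not_not]
      constructor
      · rintro ⟨⟨hxS, hxT⟩, h⟩
        exact ⟨h hxS, hxT⟩
      · rintro ⟨hxU, hxT⟩
        exact ⟨⟨hU hxU, hxT⟩, fun _ => hxU⟩
    rw [h2]
    ring

/-- The metabelian group `(Finset ι → R) ⋊ (ι →₀ R)`: the "squarefree module" over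
the commutative ring `R` in variables `x_j (j : ι)`, acted on by the additive group
`ι →₀ R`, with `v` acting as multiplication by `∏ j, (1 + v j · x_j)`. -/
@[ext]
structure Gg (ι R : Type*) [DecidableEq ι] [CommRing R] where
  a : Finset ι → R
  v : ι →₀ R

namespace Gg

variable (x y z : Gg ι R)

noncomputable instance : One (Gg ι R) := ⟨⟨0, 0⟩⟩
noncomputable instance : Mul (Gg ι R) := ⟨fun x y => ⟨x.a + rho x.v y.a, x.v + y.v⟩⟩
noncomputable instance : Inv (Gg ι R) := ⟨fun x => ⟨-(rho (-x.v) x.a), -x.v⟩⟩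

@[simp] theorem one_a : (1 : Gg ι R).a = 0 := rfl
@[simp] theorem one_v : (1 : Gg ι R).v = 0 := rfl
@[simp] theorem mul_a : (x * y).a = x.a + rho x.v y.a := rfl
@[simp] theorem mul_v : (x * y).v = x.v + y.v := rfl
@[simp] theorem inv_a : (x⁻¹).a = -(rho (-x.v) x.a) := rfl
@[simp] theorem inv_v : (x⁻¹).v = -x.v := rfl

noncomputable instance instGroup : Group (Gg ι R) := by
  refine Group.ofLeftAxioms ?_ ?_ ?_
  · intro x y z
    ext1
    · show (x.a + rho x.v y.a) + rho (x.v + y.v) z.a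
        = x.a + rho x.v (y.a + rho y.v z.a)
      rw [rho_add_right, ← rho_rho]
      abel
    · show x.v + y.v + z.v = x.v + (y.v + z.v)
      exact add_assoc _ _ _
  · intro x
    ext1
    · show (0 : Finset ι → R) + rho 0 x.a = x.a
      rw [rho_zero, zero_add]
    · exact zero_add _
  · intro x
    ext1
    · show -(rho (-x.v) x.a) + rho (-x.v) x.a = 0
      exact neg_add_cancel _
    · exact neg_add_cancel _

end Gg

section Malcev

/-- `b` lies in the `k`-th power of the ideal generated by `x_j, j ∈ J`. -/
def Deg (J : Finset ι) (k : ℕ) (b : Finset ι → R) : Prop :=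
  ∀ S : Finset ι, b S ≠ 0 → k ≤ (S ∩ J).card

theorem Deg.zero (J : Finset ι) (b : Finset ι → R) : Deg J 0 b := fun _ _ => Nat.zero_le _

theorem Deg.sub {J : Finset ι} {k : ℕ} {b c : Finset ι → R} (hb : Deg J k b)
    (hc : Deg J k c) : Deg J k (b - c) := by
  intro S hS
  rcases ne_or_eq (b S) 0 with h | h
  · exact hb S h
  · refine hc S fun h2 => hS ?_
    simp [Pi.sub_apply, h, h2]

theorem Deg.neg {J : Finset ι} {k : ℕ} {b : Finset ι → R} (hb : Deg J k b) :
    Deg J k (-b) := by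
  intro S hS
  exact hb S (by simpa using hS)

theorem Deg.step {J : Finset ι} {k : ℕ} {u : ι →₀ R} (hu : u.support ⊆ J)
    {b : Finset ι → R} (hb : Deg J k b) : Deg J (k + 1) (rho u b - b) := by
  intro S hS
  have h0 : (rho u b - b) S = ∑ T ∈ S.powerset.erase S, (∏ j ∈ S \ T, u j) * b T := by
    have hSmem : S ∈ S.powerset := Finset.mem_powerset.2 (Finset.Subset.refl S)
    have hsplit := (Finset.sum_erase_add S.powerset
      (fun T => (∏ j ∈ S \ T, u j) * b T) hSmem).symm
    simp only [Finset.sdiff_self, Finset.prod_empty, one_mul] at hsplit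
    have : rho u b S = ∑ T ∈ S.powerset, (∏ j ∈ S \ T, u j) * b T := rfl
    rw [Pi.sub_apply, this, hsplit]
    abel
  rw [h0] at hS
  obtain ⟨T, hT, hne⟩ := Finset.exists_ne_zero_of_sum_ne_zero hS
  simp only [Finset.mem_erase, Finset.mem_powerset] at hT
  have hbT : b T ≠ 0 := fun h => hne (by simp [h])
  have hprod : ∀ j ∈ S \ T, u j ≠ 0 := by
    intro j hj hj0
    exact hne (by rw [Finset.prod_eq_zero hj hj0, zero_mul])
  have hsub : S \ T ⊆ S ∩ J := by
    intro j hj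
    have := hprod j hj
    have hjJ : j ∈ J := hu (Finsupp.mem_support_iff.2 this)
    exact Finset.mem_inter.2 ⟨(Finset.mem_sdiff.1 hj).1, hjJ⟩
  have hTJ : T ∩ J ⊆ S ∩ J := Finset.inter_subset_inter hT.2 (Finset.Subset.refl J)
  have hdisj : Disjoint (T ∩ J) (S \ T) := by
    refine Finset.disjoint_left.2 fun j hj1 hj2 => ?_
    exact (Finset.mem_sdiff.1 hj2).2 (Finset.mem_inter.1 hj1).1
  have hne2 : (S \ T).Nonempty := by
    rw [Finset.sdiff_nonempty]
    intro h
    exact hT.1 (Finset.Subset.antisymm hT.2 h)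
  have hcard : (T ∩ J).card + (S \ T).card ≤ (S ∩ J).card := by
    rw [← Finset.card_union_of_disjoint hdisj]
    exact Finset.card_le_card (Finset.union_subset hTJ hsub)
  have h1 : k ≤ (T ∩ J).card := hb T hbT
  have h2 : 1 ≤ (S \ T).card := Finset.card_pos.2 hne2
  omega

theorem Deg.card_lt {J : Finset ι} {k : ℕ} {b : Finset ι → R} (hb : Deg J k b)
    (h : J.card < k) : b = 0 := by
  funext S
  by_contra hS
  have := hb S hS
  have h2 : (S ∩ J).card ≤ J.card := Finset.card_le_card (Finset.inter_subset_right)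
  omega

theorem malcevPair_succ {G : Type*} [Monoid G] (c : ℕ) (x y : G) :
    malcevPair (c + 1) x y
      = ((malcevPair c x y).1 * (malcevPair c x y).2,
         (malcevPair c x y).2 * (malcevPair c x y).1) := rfl

/-- The key Malcev-law computation for pairs of elements of `T`. -/
theorem malcev_of_small {x y : Gg ι R} (hx : x.v.support.card ≤ 1)
    (hy : y.v.support.card ≤ 1) {c : ℕ} (hc : 3 ≤ c) :
    malcevAlpha c x y = malcevBeta c x y := by
  set J : Finset ι := x.v.support ∪ y.v.support with hJ
  have hJcard : J.card ≤ 2 := le_trans (Finset.card_union_le _ _) (by omega)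
  -- invariant for c ≥ 1
  have key : ∀ c : ℕ, 1 ≤ c →
      (malcevPair c x y).1.v = (malcevPair c x y).2.v ∧
      ((malcevPair c x y).1.v.support ⊆ J) ∧
      Deg J c ((malcevPair c x y).1.a - (malcevPair c x y).2.a) := by
    intro c hc
    induction c, hc using Nat.le_induction with
    | base =>
      refine ⟨?_, ?_, ?_⟩
      · show x.v + y.v = y.v + x.v
        exact add_comm _ _
      · show (x.v + y.v).support ⊆ J
        exact (Finsupp.support_add).trans (by rw [hJ])
      · show Deg J 1 ((x.a + rho x.v y.a) - (y.a + rho y.v x.a))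
        have h1 : Deg J 1 (rho x.v y.a - y.a) :=
          Deg.step (Finset.subset_union_left) (Deg.zero J y.a)
        have h2 : Deg J 1 (rho y.v x.a - x.a) :=
          Deg.step (Finset.subset_union_right) (Deg.zero J x.a)
        have : (x.a + rho x.v y.a) - (y.a + rho y.v x.a)
            = (rho x.v y.a - y.a) - (rho y.v x.a - x.a) := by abel
        rw [this]
        exact h1.sub h2
    | succ n hn ih =>
      obtain ⟨ihv, ihs, ihd⟩ := ih
      set A := (malcevPair n x y).1 with hA
      set B := (malcevPair n x y).2 with hB
      rw [malcevPair_succ]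
      refine ⟨?_, ?_, ?_⟩
      · show A.v + B.v = B.v + A.v
        exact add_comm _ _
      · show (A.v + B.v).support ⊆ J
        refine (Finsupp.support_add).trans (Finset.union_subset ihs ?_)
        rwa [← ihv]
      · show Deg J (n+1) ((A.a + rho A.v B.a) - (B.a + rho B.v A.a))
        have hBv : B.v = A.v := ihv.symm
        have hrsub : rho A.v (A.a - B.a) = rho A.v A.a - rho A.v B.a := by
          have := rho_add_right A.v A.a (-(B.a))
          rw [rho_neg_right] at this
          simpa [sub_eq_add_neg] using this
        have heq : (A.a + rho A.v B.a) - (B.a + rho B.v A.a)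
            = -(rho A.v (A.a - B.a) - (A.a - B.a)) := by
          rw [hBv, hrsub]
          abel
        rw [heq]
        exact (Deg.step ihs ihd).neg
  -- conclude at c = 3
  have h3 := key 3 (by omega)
  have heq3 : malcevPair 3 x y = ((malcevPair 3 x y).2, (malcevPair 3 x y).2) := by
    obtain ⟨hv, _, hd⟩ := h3
    have hz : (malcevPair 3 x y).1.a - (malcevPair 3 x y).2.a = 0 :=
      hd.card_lt (by omega)
    have ha : (malcevPair 3 x y).1.a = (malcevPair 3 x y).2.a := by
      have := sub_eq_zero.1 hz
      exact this
    ext1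
    · exact Gg.ext ha hv
    · rfl
  -- propagate to all c ≥ 3
  have hall : ∀ m : ℕ, 3 ≤ m → (malcevPair m x y).1 = (malcevPair m x y).2 := by
    intro m hm
    induction m, hm using Nat.le_induction with
    | base => exact congrArg Prod.fst heq3 |>.trans (congrArg Prod.snd heq3).symm |>.trans rfl
    | succ n hn ih =>
      rw [malcevPair_succ, ih]
  exact hall c hc

end Malcev

section Main

/-- The main group. -/
abbrev G0 : Type := Gg ℕ ℤ

/-- The generating set: all elements whose `H`-part is supported on at most one letter. -/
def TT : Set G0 := {g : G0 | g.v.support.card ≤ 1}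

theorem TT_normal : ∀ x ∈ TT, ∀ g : G0, g * x * g⁻¹ ∈ TT := by
  intro x hx g
  have : (g * x * g⁻¹).v = x.v := by
    simp only [Gg.mul_v, Gg.inv_v]
    abel
  simpa [TT, this] using hx

theorem TT_comm_closed : ∀ x ∈ TT, ∀ y ∈ TT, ⁅x, y⁆ ∈ TT := by
  intro x _ y _
  have : ⁅x, y⁆.v = 0 := by
    rw [commutatorElement_def]
    simp only [Gg.mul_v, Gg.inv_v]
    abel
  simp [TT, this]

theorem TT_gen : Subgroup.closure TT = ⊤ := by
  rw [eq_top_iff]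
  intro g _
  have hg : g = (⟨g.a, 0⟩ : G0) * ⟨0, g.v⟩ := by
    refine (Gg.ext ?_ ?_).symm
    · show g.a + rho 0 (0 : Finset ℕ → ℤ) = g.a
      rw [rho_zero]; simp
    · show (0 : ℕ →₀ ℤ) + g.v = g.v
      simp
  rw [hg]
  refine mul_mem (Subgroup.subset_closure ?_) ?_
  · show ((0 : ℕ →₀ ℤ)).support.card ≤ 1
    simp
  · -- induction on the finsupp
    induction g.v using Finsupp.induction with
    | zero =>
      exact one_mem _
    | single_add j z f hjf hz ih =>
      have : (⟨0, Finsupp.single j z + f⟩ : G0) = ⟨0, Finsupp.single j z⟩ * ⟨0, f⟩ := by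
        refine Gg.ext ?_ rfl
        show (0 : Finset ℕ → ℤ) = 0 + rho (Finsupp.single j z) 0
        rw [rho_zero_right]; simp
      rw [this]
      refine mul_mem (Subgroup.subset_closure ?_) ih
      show ((Finsupp.single j z)).support.card ≤ 1
      exact le_trans (Finset.card_le_card Finsupp.support_single_subset) (by simp)

/-- The abelian normal subgroup. -/
noncomputable def Asub : Subgroup G0 where
  carrier := {g : G0 | g.v = 0}
  mul_mem' := by
    intro x y hx hy
    simp only [Set.mem_setOf_eq, Gg.mul_v] at *
    rw [hx, hy, add_zero]
  one_mem' := rfl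
  inv_mem' := by
    intro x hx
    simp only [Set.mem_setOf_eq, Gg.inv_v] at *
    rw [hx, neg_zero]

theorem metabelian_thm : ∃ A : Subgroup G0, A.Normal ∧ (∀ x y : A, x * y = y * x) ∧
    ∀ x y : G0, ⁅x, y⁆ ∈ A := by
  refine ⟨Asub, ⟨?_⟩, ?_, ?_⟩
  · intro n hn g
    show (g * n * g⁻¹).v = 0
    have hn' : n.v = 0 := hn
    simp only [Gg.mul_v, Gg.inv_v, hn']
    abel
  · rintro ⟨x, hx⟩ ⟨y, hy⟩
    have hx' : x.v = 0 := hx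
    have hy' : y.v = 0 := hy
    refine Subtype.ext ?_
    show x * y = y * x
    refine Gg.ext ?_ ?_
    · show x.a + rho x.v y.a = y.a + rho y.v x.a
      rw [hx', hy', rho_zero, rho_zero, add_comm]
    · show x.v + y.v = y.v + x.v
      rw [add_comm]
  · intro x y
    show ⁅x, y⁆.v = 0
    rw [commutatorElement_def]
    simp only [Gg.mul_v, Gg.inv_v]
    abel

theorem not_fg_thm : ¬ Group.FG G0 := by
  intro hfg
  -- project onto the H-part
  let π : G0 →* Multiplicative (ℕ →₀ ℤ) :=
    { toFun := fun g => Multiplicative.ofAdd g.v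
      map_one' := rfl
      map_mul' := fun x y => rfl }
  have hsurj : Function.Surjective π := by
    intro w
    exact ⟨⟨0, w.toAdd⟩, rfl⟩
  have hfg2 : Group.FG (Multiplicative (ℕ →₀ ℤ)) := Group.fg_of_surjective hsurj
  obtain ⟨S, hS⟩ := hfg2.1
  set J : Finset ℕ := S.sup (fun w => (Multiplicative.toAdd w).support) with hJdef
  set j0 : ℕ := J.sup id + 1 with hj0
  have hj0J : j0 ∉ J := by
    intro h
    have h2 := Finset.le_sup (f := id) h
    simp only [id] at h2
    omega
  let H' : Subgroup (Multiplicative (ℕ →₀ ℤ)) :=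
    { carrier := {w | (Multiplicative.toAdd w) j0 = 0}
      mul_mem' := by
        intro a b ha hb
        simp only [Set.mem_setOf_eq] at *
        show (Multiplicative.toAdd a + Multiplicative.toAdd b) j0 = 0
        rw [Finsupp.add_apply, ha, hb, add_zero]
      one_mem' := rfl
      inv_mem' := by
        intro a ha
        simp only [Set.mem_setOf_eq] at *
        show (-(Multiplicative.toAdd a)) j0 = 0
        rw [Finsupp.neg_apply, ha, neg_zero] }
  have hle : Subgroup.closure (S : Set (Multiplicative (ℕ →₀ ℤ))) ≤ H' := by
    rw [Subgroup.closure_le]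
    intro w hw
    show (Multiplicative.toAdd w) j0 = 0
    by_contra hne
    have : j0 ∈ (Multiplicative.toAdd w).support := Finsupp.mem_support_iff.2 hne
    have hsub := Finset.le_sup (f := fun w => (Multiplicative.toAdd w).support) hw
    exact hj0J (hsub this)
  rw [hS] at hle
  have : Multiplicative.ofAdd (Finsupp.single j0 (1 : ℤ)) ∈ H' := hle (Set.mem_univ _)
  have h2 : (Finsupp.single j0 (1 : ℤ)) j0 = 0 := this
  rw [Finsupp.single_apply] at h2
  simp at h2

end Main

section Trunc

theorem map_attachFin {n : ℕ} (s : Finset ℕ) (h : ∀ m ∈ s, m < n) :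
    (s.attachFin h).map Fin.valEmbedding = s := by
  ext m
  simp only [Finset.mem_map, Finset.mem_attachFin, Fin.valEmbedding_apply]
  constructor
  · rintro ⟨a, ha, rfl⟩; exact ha
  · intro hm; exact ⟨⟨m, h m hm⟩, hm, rfl⟩

theorem sum_powerset_map {N : ℕ} {R : Type*} [AddCommMonoid R] (S : Finset (Fin N))
    (F : Finset ℕ → R) :
    ∑ T ∈ (S.map Fin.valEmbedding).powerset, F T
      = ∑ U ∈ S.powerset, F (U.map Fin.valEmbedding) := by
  have hb : ∀ T ∈ (S.map Fin.valEmbedding).powerset, ∀ m ∈ T, m < N := by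
    intro T hT m hm
    have := Finset.mem_powerset.1 hT hm
    simp only [Finset.mem_map, Fin.valEmbedding_apply] at this
    obtain ⟨a, _, rfl⟩ := this
    exact a.isLt
  refine Finset.sum_bij' (fun T hT => T.attachFin (hb T hT))
    (fun U _ => U.map Fin.valEmbedding) ?_ ?_ ?_ ?_ ?_
  · intro T hT
    rw [Finset.mem_powerset]
    intro a ha
    rw [Finset.mem_attachFin] at ha
    have := Finset.mem_powerset.1 hT ha
    simp only [Finset.mem_map, Fin.valEmbedding_apply] at this
    obtain ⟨b, hb2, hba⟩ := this
    have : b = a := Fin.ext hba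
    rwa [← this]
  · intro U hU
    rw [Finset.mem_powerset] at *
    exact Finset.map_subset_map.2 hU
  · intro T hT
    exact map_attachFin T (hb T hT)
  · intro U _
    ext a
    simp [Finset.mem_attachFin, Finset.mem_map]
    constructor
    · rintro ⟨b, hb2, hba⟩
      rwa [← Fin.ext hba]
    · intro ha; exact ⟨a, ha, rfl⟩
  · intro T hT
    rw [map_attachFin T (hb T hT)]

theorem map_sdiff_fin {N : ℕ} (S U : Finset (Fin N)) :
    (S.map Fin.valEmbedding) \ (U.map Fin.valEmbedding) = (S \ U).map Fin.valEmbedding := by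
  ext m
  simp only [Finset.mem_sdiff, Finset.mem_map, Fin.valEmbedding_apply]
  constructor
  · rintro ⟨⟨a, ha, rfl⟩, h2⟩
    exact ⟨a, ⟨ha, fun hU => h2 ⟨a, hU, rfl⟩⟩, rfl⟩
  · rintro ⟨a, ha, rfl⟩
    obtain ⟨h1, h2⟩ := ha
    refine ⟨⟨a, h1, rfl⟩, ?_⟩
    rintro ⟨b, hb2, hba⟩
    rw [Fin.ext hba] at hb2
    exact h2 hb2

variable (N M : ℕ)

/-- truncation of the module part. -/
def truncA (a : Finset ℕ → ℤ) : Finset (Fin N) → ZMod M :=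
  fun S => ((a (S.map Fin.valEmbedding) : ℤ) : ZMod M)

/-- truncation of the letters part. -/
noncomputable def truncV (v : ℕ →₀ ℤ) : Fin N →₀ ZMod M :=
  Finsupp.onFinset Finset.univ (fun j => ((v j.val : ℤ) : ZMod M)) (fun _ _ => Finset.mem_univ _)

@[simp] theorem truncV_apply (v : ℕ →₀ ℤ) (j : Fin N) :
    truncV N M v j = ((v j.val : ℤ) : ZMod M) := rfl

theorem trunc_rho (v : ℕ →₀ ℤ) (b : Finset ℕ → ℤ) :
    truncA N M (rho v b) = rho (truncV N M v) (truncA N M b) := by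
  funext S
  show ((rho v b (S.map Fin.valEmbedding) : ℤ) : ZMod M) = _
  rw [rho]
  push_cast
  rw [sum_powerset_map]
  rw [rho]
  refine Finset.sum_congr rfl ?_
  intro U hU
  rw [map_sdiff_fin, Finset.prod_map]
  rfl

/-- the truncation homomorphism. -/
noncomputable def truncHom : G0 →* Gg (Fin N) (ZMod M) where
  toFun g := ⟨truncA N M g.a, truncV N M g.v⟩
  map_one' := by
    refine Gg.ext ?_ ?_
    · funext S; show ((0 : ℤ) : ZMod M) = 0; simp
    · ext j; show (((0 : ℕ →₀ ℤ) j.val : ℤ) : ZMod M) = 0; simp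
  map_mul' := by
    intro x y
    refine Gg.ext ?_ ?_
    · show truncA N M (x.a + rho x.v y.a) = truncA N M x.a + rho (truncV N M x.v) (truncA N M y.a)
      rw [← trunc_rho]
      funext S
      show ((_ : ℤ) : ZMod M) = _
      rw [Pi.add_apply]
      push_cast
      rfl
    · ext j
      show (((x.v + y.v) j.val : ℤ) : ZMod M) = _
      rw [Finsupp.add_apply]
      push_cast
      rfl

noncomputable def ggEquivProd : Gg (Fin N) (ZMod M) ≃
    ((Finset (Fin N) → ZMod M) × (Fin N →₀ ZMod M)) where
  toFun g := (g.a, g.v)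
  invFun p := ⟨p.1, p.2⟩
  left_inv g := rfl
  right_inv p := rfl

theorem card_gg_fin {p : ℕ} (hp : p.Prime) (K : ℕ) :
    ∃ e : ℕ, Nat.card (Gg (Fin N) (ZMod (p ^ K))) = p ^ e := by
  rw [Nat.card_congr (ggEquivProd N (p ^ K)), Nat.card_prod]
  rw [Nat.card_congr (Finsupp.equivFunOnFinite)]
  rw [Nat.card_fun, Nat.card_fun]
  rw [Nat.card_zmod]
  refine ⟨K * Nat.card (Finset (Fin N)) + K * Nat.card (Fin N), ?_⟩
  rw [← pow_mul, ← pow_mul, ← pow_add]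

theorem card_quot_ker_dvd {H : Type*} [Group H] (φ : G0 →* H) :
    Nat.card (G0 ⧸ φ.ker) ∣ Nat.card H := by
  rw [Nat.card_congr (QuotientGroup.quotientKerEquivRange φ).toEquiv]
  exact Subgroup.card_subgroup_dvd_card φ.range

theorem int_cast_pow_ne {p : ℕ} (hp : p.Prime) (z : ℤ) (hz : z ≠ 0) :
    ((z : ℤ) : ZMod (p ^ z.natAbs)) ≠ 0 := by
  intro h
  rw [ZMod.intCast_zmod_eq_zero_iff_dvd] at h
  have h2 : p ^ z.natAbs ∣ z.natAbs := by
    have h5 := Int.natAbs_dvd_natAbs.2 h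
    rwa [Int.natAbs_natCast] at h5
  have h3 : p ^ z.natAbs ≤ z.natAbs :=
    Nat.le_of_dvd (Int.natAbs_pos.2 hz) h2
  have h4 : z.natAbs < p ^ z.natAbs := Nat.lt_pow_self hp.one_lt
  omega

theorem residually_thm (p : ℕ) (hp : p.Prime) (g : G0) (hg : g ≠ 1) :
    ∃ N : Subgroup G0, N.Normal ∧ g ∉ N ∧ ∃ k : ℕ, Nat.card (G0 ⧸ N) = p ^ k := by
  by_cases hv : g.v = 0
  · -- the module part must be nontrivial
    have hga : g.a ≠ 0 := by
      intro h
      exact hg (Gg.ext h hv)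
    have : ∃ S0, g.a S0 ≠ 0 := by
      by_contra h
      push_neg at h
      exact hga (funext fun S => h S)
    obtain ⟨S0, hS0⟩ := this
    set K : ℕ := (g.a S0).natAbs with hK
    have hbound : ∀ m ∈ S0, m < S0.sup id + 1 := by
      intro m hm
      have := Finset.le_sup (f := id) hm
      simp only [id] at this
      omega
    set N : ℕ := S0.sup id + 1
    let φ := truncHom N (p ^ K)
    refine ⟨φ.ker, φ.normal_ker, ?_, ?_⟩
    · intro hmem
      rw [MonoidHom.mem_ker] at hmem
      have ha : (φ g).a = 0 := by rw [hmem]; rfl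
      have h2 := congrFun ha (S0.attachFin hbound)
      show False
      rw [show (φ g).a = truncA N (p ^ K) g.a from rfl] at h2
      rw [truncA, map_attachFin] at h2
      exact int_cast_pow_ne hp _ hS0 h2
    · obtain ⟨e, he⟩ := card_gg_fin N hp K
      have hdvd := card_quot_ker_dvd φ
      rw [he] at hdvd
      obtain ⟨k, _, hk⟩ := (Nat.dvd_prime_pow hp).1 hdvd
      exact ⟨k, hk⟩
  · -- the letters part is nontrivial
    have : ∃ j0, g.v j0 ≠ 0 := by
      by_contra h
      push_neg at h
      exact hv (Finsupp.ext h)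
    obtain ⟨j0, hj0⟩ := this
    set K : ℕ := (g.v j0).natAbs with hK
    let φ : G0 →* Multiplicative (ZMod (p ^ K)) :=
      { toFun := fun x => Multiplicative.ofAdd ((x.v j0 : ℤ) : ZMod (p ^ K))
        map_one' := by
          show Multiplicative.ofAdd (((0 : ℕ →₀ ℤ) j0 : ℤ) : ZMod (p ^ K)) = 1
          simp
        map_mul' := by
          intro x y
          show Multiplicative.ofAdd (((x.v + y.v) j0 : ℤ) : ZMod (p ^ K)) = _
          rw [Finsupp.add_apply]
          push_cast
          rw [ofAdd_add] }
    refine ⟨φ.ker, φ.normal_ker, ?_, ?_⟩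
    · intro hmem
      rw [MonoidHom.mem_ker] at hmem
      have h2 : ((g.v j0 : ℤ) : ZMod (p ^ K)) = 0 := by
        have := congrArg Multiplicative.toAdd hmem
        exact this
      exact int_cast_pow_ne hp _ hj0 h2
    · have hdvd := card_quot_ker_dvd φ
      have hcard : Nat.card (Multiplicative (ZMod (p ^ K))) = p ^ K := by
        rw [Nat.card_congr (Multiplicative.toAdd (α := ZMod (p ^ K))), Nat.card_zmod]
      rw [hcard] at hdvd
      obtain ⟨k, _, hk⟩ := (Nat.dvd_prime_pow hp).1 hdvd
      exact ⟨k, hk⟩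

end Trunc

section PosLaw

variable (L : ℕ)

/-- the indicator-type letter vector: value `χ` on `{0, …, 2L}`. -/
noncomputable def wv (χ : ℤ) : ℕ →₀ ℤ :=
  Finsupp.onFinset (Finset.range (2*L+1)) (fun j => if j < 2*L+1 then χ else 0)
    (fun j h => by
      rw [Finset.mem_range]
      by_contra h2
      simp [h2] at h)

@[simp] theorem wv_apply (χ : ℤ) (j : ℕ) :
    wv L χ j = if j < 2*L+1 then χ else 0 := rfl

theorem wv_add (χ χ' : ℤ) : wv L χ + wv L χ' = wv L (χ + χ') := by
  ext j
  rw [Finsupp.add_apply]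
  simp only [wv_apply]
  split <;> simp

theorem wv_zero : wv L 0 = 0 := by
  ext j
  simp only [wv_apply, Finsupp.coe_zero, Pi.zero_apply]
  split <;> rfl

/-- marker index for variable `a`. -/
def mrk (a : ℕ) : ℕ := 2*L+1+a

/-- basis element of the module at the singleton `{s}`. -/
def delta (s : ℕ) : Finset ℕ → ℤ := fun S => if S = {s} then 1 else 0

/-- the substitution. -/
noncomputable def sub (a : ℕ) : G0 := ⟨delta (mrk L a), wv L ((L+1 : ℤ) ^ a)⟩

/-- evaluation set: marker of `a` together with `{0, …, e-1}`. -/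
def Sae (a e : ℕ) : Finset ℕ := insert (mrk L a) (Finset.range e)

theorem atomic {e : ℕ} (he : e ≤ 2*L) (χ : ℤ) (b a : ℕ) :
    rho (wv L χ) (delta (mrk L b)) (Sae L a e) = if b = a then χ ^ e else 0 := by
  have hmrk_range : ∀ c : ℕ, mrk L c ∉ Finset.range e := by
    intro c h
    rw [Finset.mem_range, mrk] at h
    omega
  by_cases hba : b = a
  · subst hba
    rw [rho, if_pos rfl]
    rw [Finset.sum_eq_single {mrk L b}]
    · rw [delta, if_pos rfl, mul_one]
      have h1 : Sae L b e \ {mrk L b} = Finset.range e := by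
        rw [← Finset.erase_eq, Sae, Finset.erase_insert (hmrk_range b)]
      rw [h1]
      rw [Finset.prod_congr rfl (fun j hj => ?_), Finset.prod_const, Finset.card_range]
      rw [Finset.mem_range] at hj
      rw [wv_apply, if_pos (by omega)]
    · intro T _ hT
      rw [delta, if_neg hT, mul_zero]
    · intro h
      exact absurd (Finset.mem_powerset.2 (by
        rw [Finset.singleton_subset_iff, Sae]
        exact Finset.mem_insert_self _ _)) h
  · rw [rho, if_neg hba]
    refine Finset.sum_eq_zero ?_
    intro T hT
    rcases eq_or_ne T {mrk L b} with rfl | hne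
    · exfalso
      have := Finset.mem_powerset.1 hT
      rw [Finset.singleton_subset_iff, Sae, Finset.mem_insert] at this
      rcases this with h | h
      · rw [mrk, mrk] at h
        omega
      · exact hmrk_range b h
    · rw [delta, if_neg hne, mul_zero]

/-- evaluation of a word under the substitution `sub`. -/
noncomputable def val (w : List ℕ) : G0 := (w.map (sub L)).prod

@[simp] theorem val_nil : val L [] = 1 := rfl

theorem val_cons (h : ℕ) (t : List ℕ) : val L (h :: t) = sub L h * val L t := by
  rw [val, List.map_cons, List.prod_cons, val]

/-- prefix-encoding values at the positions of the letter `a`. -/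
def chi (w : List ℕ) (a : ℕ) : List ℤ :=
  match w with
  | [] => []
  | h :: t => (if h = a then [(0 : ℤ)] else []) ++ (chi t a).map (· + (L+1 : ℤ) ^ h)

theorem map_shift_sum (l : List ℤ) (c χ0 : ℤ) (e : ℕ) :
    (List.map ((fun x => (χ0 + x) ^ e) ∘ (fun x => x + c)) l).sum
      = (List.map (fun x => (χ0 + c + x) ^ e) l).sum := by
  induction l with
  | nil => rfl
  | cons a t ih =>
    simp only [List.map_cons, List.sum_cons, Function.comp_apply, ih]
    ring_nf

theorem moment_formula {e : ℕ} (he : e ≤ 2*L) (a : ℕ) :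
    ∀ (w : List ℕ) (χ0 : ℤ),
      rho (wv L χ0) (val L w).a (Sae L a e)
        = ((chi L w a).map (fun x => (χ0 + x) ^ e)).sum := by
  intro w
  induction w with
  | nil =>
    intro χ0
    show rho (wv L χ0) (0 : Finset ℕ → ℤ) (Sae L a e) = 0
    rw [rho_zero_right]
    rfl
  | cons h t ih =>
    intro χ0
    have hval : (val L (h :: t)).a
        = delta (mrk L h) + rho (wv L ((L+1 : ℤ) ^ h)) (val L t).a := by
      rw [val_cons]
      rfl
    rw [hval, rho_add_right]
    have h2 : rho (wv L χ0) (rho (wv L ((L+1:ℤ) ^ h)) (val L t).a)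
        = rho (wv L (χ0 + (L+1:ℤ) ^ h)) (val L t).a := by
      rw [rho_rho, wv_add]
    rw [Pi.add_apply, h2, atomic L he, ih (χ0 + (L+1:ℤ) ^ h)]
    rw [chi]
    rcases eq_or_ne h a with rfl | hha
    · rw [if_pos rfl, if_pos rfl]
      simp only [List.singleton_append, List.map_cons, List.map_map, List.sum_cons]
      rw [add_zero, map_shift_sum]
    · rw [if_neg hha, if_neg fun hh => hha hh, List.nil_append]
      rw [zero_add, List.map_map, map_shift_sum]

theorem coefficient_eq {e : ℕ} (he : e ≤ 2*L) (a : ℕ) (w : List ℕ) :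
    (val L w).a (Sae L a e) = ((chi L w a).map (fun x => x ^ e)).sum := by
  have := moment_formula L he a w 0
  rw [wv_zero, rho_zero] at this
  rw [this]
  congr 1
  refine List.map_congr_left fun x _ => by rw [zero_add]

theorem chi_length (w : List ℕ) (a : ℕ) : (chi L w a).length = w.count a := by
  induction w with
  | nil => rfl
  | cons h t ih =>
    rw [chi, List.length_append, List.length_map, ih, List.count_cons]
    rcases eq_or_ne h a with rfl | hha
    · simp only [if_pos rfl, List.length_singleton, beq_self_eq_true, if_true]
      omega
    · simp [hha]

theorem chi_nonneg (w : List ℕ) (a : ℕ) : ∀ x ∈ chi L w a, 0 ≤ x := by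
  induction w with
  | nil => intro x hx; simp [chi] at hx
  | cons h t ih =>
    intro x hx
    rw [chi, List.mem_append] at hx
    rcases hx with hx | hx
    · rcases eq_or_ne h a with rfl | hha
      · rw [if_pos rfl, List.mem_singleton] at hx
        omega
      · rw [if_neg hha] at hx
        simp at hx
    · rw [List.mem_map] at hx
      obtain ⟨y, hy, rfl⟩ := hx
      have h1 : (0 : ℤ) ≤ (L+1 : ℤ) ^ h := by positivity
      have := ih y hy
      omega

theorem chi_zero_mem (h : ℕ) (t : List ℕ) (a : ℕ) :
    (0 : ℤ) ∈ chi L (h :: t) a ↔ h = a := by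
  rw [chi, List.mem_append]
  constructor
  · rintro (hx | hx)
    · by_contra hha
      rw [if_neg hha] at hx
      simp at hx
    · exfalso
      rw [List.mem_map] at hx
      obtain ⟨y, hy, hxy⟩ := hx
      have h1 : (1 : ℤ) ≤ (L+1 : ℤ) ^ h := one_le_pow₀ (by omega)
      have h2 := chi_nonneg L t a y hy
      omega
  · intro hha
    rw [if_pos hha]
    simp

theorem chi_reconstruct : ∀ (u w : List ℕ),
    (∀ a : ℕ, ((chi L u a : Multiset ℤ)) = (chi L w a : Multiset ℤ)) → u = w := by
  intro u
  induction u with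
  | nil =>
    intro w hw
    cases w with
    | nil => rfl
    | cons h t =>
      exfalso
      have := hw h
      have h2 : (0 : ℤ) ∈ chi L (h :: t) h := (chi_zero_mem L h t h).2 rfl
      have h3 : (0 : ℤ) ∈ (chi L ([] : List ℕ) h : Multiset ℤ) := by
        rw [this]
        exact_mod_cast h2
      simp [chi] at h3
  | cons h t ih =>
    intro w hw
    cases w with
    | nil =>
      exfalso
      have := hw h
      have h2 : (0 : ℤ) ∈ chi L (h :: t) h := (chi_zero_mem L h t h).2 rfl
      have h3 : (0 : ℤ) ∈ (chi L ([] : List ℕ) h : Multiset ℤ) := by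
        rw [← this]
        exact_mod_cast h2
      simp [chi] at h3
    | cons h' t' =>
      have hh : h' = h := by
        have h2 : (0 : ℤ) ∈ chi L (h :: t) h := (chi_zero_mem L h t h).2 rfl
        have h3 : (0 : ℤ) ∈ chi L (h' :: t') h := by
          have := hw h
          have h4 : (0 : ℤ) ∈ (chi L (h' :: t') h : Multiset ℤ) := by
            rw [← this]; exact_mod_cast h2
          exact_mod_cast h4
        exact (chi_zero_mem L h' t' h).1 h3
      subst hh
      have hmap : ∀ (l l' : List ℤ),
          (↑(l.map (· + (L+1:ℤ) ^ h')) : Multiset ℤ) = ↑(l'.map (· + (L+1:ℤ) ^ h')) →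
            (l : Multiset ℤ) = (l' : Multiset ℤ) := by
        intro l l' hll
        rw [← Multiset.map_coe, ← Multiset.map_coe] at hll
        exact Multiset.map_injective (add_left_injective _) hll
      have htails : ∀ a : ℕ, ((chi L t a : Multiset ℤ)) = (chi L t' a : Multiset ℤ) := by
        intro a
        have hthis := hw a
        rw [chi, chi] at hthis
        rcases eq_or_ne h' a with rfl | hha
        · rw [if_pos rfl, List.singleton_append, List.singleton_append,
            ← Multiset.cons_coe, ← Multiset.cons_coe] at hthis
          exact hmap _ _ ((Multiset.cons_inj_right _).1 hthis)
        · rw [if_neg hha, List.nil_append, List.nil_append] at hthis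
          exact hmap _ _ hthis
      rw [ih t' htails]

end PosLaw

section Moments

theorem sum_map_finsum (μ : Multiset ℤ) (r : Finset ℕ) (c : ℕ → ℤ) :
    (μ.map (fun x => ∑ i ∈ r, c i * x ^ i)).sum = ∑ i ∈ r, c i * (μ.map (· ^ i)).sum := by
  induction μ using Multiset.induction with
  | empty => simp
  | cons a s ih =>
    simp only [Multiset.map_cons, Multiset.sum_cons, ih, mul_add, Finset.sum_add_distrib]

theorem sum_map_single_support (μ : Multiset ℤ) (f : ℤ → ℤ) (y0 : ℤ)
    (hf : ∀ x ∈ μ, x ≠ y0 → f x = 0) :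
    (μ.map f).sum = (μ.count y0 : ℤ) * f y0 := by
  induction μ using Multiset.induction with
  | empty => simp
  | cons a s ih =>
    rw [Multiset.map_cons, Multiset.sum_cons,
      ih (fun x hx hx2 => hf x (Multiset.mem_cons_of_mem hx) hx2)]
    rcases eq_or_ne a y0 with rfl | ha
    · rw [Multiset.count_cons_self]
      push_cast
      ring
    · rw [hf a (Multiset.mem_cons_self _ _) ha, Multiset.count_cons_of_ne (Ne.symm ha)]
      ring

theorem multiset_eq_of_moments (n : ℕ) (μ ν : Multiset ℤ)
    (hcard : μ.toFinset.card + ν.toFinset.card ≤ n)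
    (h : ∀ e ≤ n, (μ.map (fun x => x ^ e)).sum = (ν.map (fun x => x ^ e)).sum) :
    μ = ν := by
  have poly : ∀ P : Polynomial ℤ, P.natDegree ≤ n →
      (μ.map (fun x => P.eval x)).sum = (ν.map (fun x => P.eval x)).sum := by
    intro P hP
    have h1 : (μ.map (fun x => P.eval x)) = μ.map
        (fun x => ∑ i ∈ Finset.range (P.natDegree + 1), P.coeff i * x ^ i) :=
      Multiset.map_congr rfl (fun x _ => Polynomial.eval_eq_sum_range x)
    have h2 : (ν.map (fun x => P.eval x)) = ν.map
        (fun x => ∑ i ∈ Finset.range (P.natDegree + 1), P.coeff i * x ^ i) :=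
      Multiset.map_congr rfl (fun x _ => Polynomial.eval_eq_sum_range x)
    rw [h1, h2, sum_map_finsum, sum_map_finsum]
    refine Finset.sum_congr rfl fun i hi => ?_
    rw [Finset.mem_range] at hi
    rw [h i (by omega)]
  rw [Multiset.ext]
  intro y0
  set R : Finset ℤ := μ.toFinset ∪ ν.toFinset with hR
  by_cases hy : y0 ∈ R
  · set P : Polynomial ℤ := ∏ y ∈ R.erase y0, (Polynomial.X - Polynomial.C y) with hP
    have hPdeg : P.natDegree ≤ n := by
      rw [hP, Polynomial.natDegree_prod _ _ (fun y _ => Polynomial.X_sub_C_ne_zero y)]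
      have : ∑ y ∈ R.erase y0, (Polynomial.X - Polynomial.C y).natDegree
          = (R.erase y0).card := by
        rw [Finset.card_eq_sum_ones]
        exact Finset.sum_congr rfl fun y _ => Polynomial.natDegree_X_sub_C y
      rw [this]
      have h3 : (R.erase y0).card < R.card := Finset.card_erase_lt_of_mem hy
      have h4 : R.card ≤ μ.toFinset.card + ν.toFinset.card := Finset.card_union_le _ _
      omega
    have hzero : ∀ (m : Multiset ℤ), ∀ x ∈ m, x ∈ R → x ≠ y0 → P.eval x = 0 := by
      intro m x _ hxR hxy
      rw [hP, Polynomial.eval_prod]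
      refine Finset.prod_eq_zero (Finset.mem_erase.2 ⟨hxy, hxR⟩) ?_
      simp
    have hPy0 : P.eval y0 ≠ 0 := by
      rw [hP, Polynomial.eval_prod]
      rw [Finset.prod_ne_zero_iff]
      intro y hy2
      have := (Finset.mem_erase.1 hy2).1
      simp only [Polynomial.eval_sub, Polynomial.eval_X, Polynomial.eval_C]
      exact sub_ne_zero.2 (Ne.symm this)
    have hμ := sum_map_single_support μ (fun x => P.eval x) y0
      (fun x hx hxy => hzero μ x hx (by
        rw [hR, Finset.mem_union]
        exact Or.inl (Multiset.mem_toFinset.2 hx)) hxy)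
    have hν := sum_map_single_support ν (fun x => P.eval x) y0
      (fun x hx hxy => hzero ν x hx (by
        rw [hR, Finset.mem_union]
        exact Or.inr (Multiset.mem_toFinset.2 hx)) hxy)
    have := poly P hPdeg
    rw [hμ, hν] at this
    have hcount : ((μ.count y0 : ℤ)) = (ν.count y0 : ℤ) :=
      mul_right_cancel₀ hPy0 this
    exact_mod_cast hcount
  · have h1 : y0 ∉ μ := fun hm =>
      hy (by rw [hR, Finset.mem_union]; exact Or.inl (Multiset.mem_toFinset.2 hm))
    have h2 : y0 ∉ ν := fun hm =>
      hy (by rw [hR, Finset.mem_union]; exact Or.inr (Multiset.mem_toFinset.2 hm))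
    rw [Multiset.count_eq_zero_of_notMem h1, Multiset.count_eq_zero_of_notMem h2]

end Moments

theorem no_pos_law (a b : FreeMonoid ℕ) (hne : a ≠ b) :
    ∃ s : ℕ → G0, FreeMonoid.lift s a ≠ FreeMonoid.lift s b := by
  set u : List ℕ := FreeMonoid.toList a with hu
  set w : List ℕ := FreeMonoid.toList b with hw
  set L : ℕ := u.length + w.length with hL
  refine ⟨sub L, fun hEq => hne ?_⟩
  have hval : val L u = val L w := by
    have h1 : FreeMonoid.lift (sub L) a = (u.map (sub L)).prod := FreeMonoid.lift_apply _ _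
    have h2 : FreeMonoid.lift (sub L) b = (w.map (sub L)).prod := FreeMonoid.lift_apply _ _
    rw [h1, h2] at hEq
    rw [val, val, hEq]
  have hmom : ∀ e, e ≤ 2*L → ∀ x : ℕ,
      ((chi L u x).map (fun t => t ^ e)).sum = ((chi L w x).map (fun t => t ^ e)).sum := by
    intro e he x
    rw [← coefficient_eq L he x u, ← coefficient_eq L he x w, hval]
  have hmult : ∀ x : ℕ, ((chi L u x : Multiset ℤ)) = (chi L w x : Multiset ℤ) := by
    intro x
    refine multiset_eq_of_moments (2*L) _ _ ?_ ?_
    · have c1 := Multiset.toFinset_card_le (chi L u x : Multiset ℤ)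
      have c2 := Multiset.toFinset_card_le (chi L w x : Multiset ℤ)
      rw [Multiset.coe_card] at c1 c2
      have l1 : (chi L u x).length ≤ u.length := by
        rw [chi_length]
        exact List.count_le_length
      have l2 : (chi L w x).length ≤ w.length := by
        rw [chi_length]
        exact List.count_le_length
      omega
    · intro e he
      rw [Multiset.map_coe, Multiset.map_coe, Multiset.sum_coe, Multiset.sum_coe]
      exact hmom e he x
  have huw : u = w := chi_reconstruct L u w hmult
  exact FreeMonoid.toList.injective huw

end MCX


theorem exists_main_counterexample (c : ℕ) (hc : 3 ≤ c) :
    Nonempty (MainCounterexample c) := by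
  refine ⟨{ G := MCX.G0
            not_fg := MCX.not_fg_thm
            metabelian := MCX.metabelian_thm
            residually_finite_p := MCX.residually_thm
            T := MCX.TT
            T_gen := MCX.TT_gen
            T_normal := MCX.TT_normal
            T_commutator_closed := MCX.TT_comm_closed
            T_satisfies_Mc := fun x hx y hy => MCX.malcev_of_small hx hy hc
            no_positive_law := MCX.no_pos_law }⟩
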